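/- Let n ≥ 5, let m_1, …, m_n, M_1, …, M_n ∈ SL(2,ℂ), and let ε_1, …, ε_n ∈ {+1, −1}. Define the n×n matrix D = (D_{i,j})_{1≤i,j≤n} by D_{i,j} = tr(m_i · M_j^{ε_i}), where M_j^{ε_i} means M_j if ε_i = +1 and M_j⁻¹ if ε_i = −1. Then det D = 0. -/
import Mathlib


/-- The trace of a `2×2` matrix in `SL(2,ℂ)`. -/
noncomputable def tr2 (x : Matrix.SpecialLinearGroup (Fin 2) ℂ) : ℂ :=
  Matrix.trace (x : Matrix (Fin 2) (Fin 2) ℂ)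

lemma trace_mul_inv (x y : Matrix.SpecialLinearGroup (Fin 2) ℂ) :
    tr2 (x * y⁻¹) = tr2 x * tr2 y - tr2 (x * y) := by
  have hinv : ((y⁻¹ : Matrix.SpecialLinearGroup (Fin 2) ℂ) : Matrix (Fin 2) (Fin 2) ℂ)
      = Matrix.trace (y : Matrix (Fin 2) (Fin 2) ℂ) • (1 : Matrix (Fin 2) (Fin 2) ℂ)
        - (y : Matrix (Fin 2) (Fin 2) ℂ) := by
    rw [Matrix.SpecialLinearGroup.coe_inv]
    have := Matrix.adjugate_fin_two (y : Matrix (Fin 2) (Fin 2) ℂ)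
    rw [this]
    ext i j
    fin_cases i <;> fin_cases j <;>
      simp [Matrix.trace_fin_two, Matrix.one_apply, sub_eq_add_neg] <;> ring
  simp only [tr2, Matrix.SpecialLinearGroup.coe_mul, hinv, Matrix.mul_sub, Matrix.mul_smul,
    Matrix.mul_one, Matrix.trace_sub, Matrix.trace_smul, smul_eq_mul]
  ring

/-- **Theorem 2 of the paper.**  Let `n ≥ 5`, `m_1,…,m_n, M_1,…,M_n ∈ SL(2,ℂ)` and
`ε_1,…,ε_n ∈ {±1}`.  The `n×n` matrix `D` with `D_{i,j} = tr(m_i M_j^{ε_i})` has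
vanishing determinant. -/
theorem det_trace_matrix_eq_zero (n : ℕ) (hn : 5 ≤ n)
    (m M : Fin n → Matrix.SpecialLinearGroup (Fin 2) ℂ)
    (ε : Fin n → ℤ) (hε : ∀ i, ε i = 1 ∨ ε i = -1) :
    (Matrix.of fun i j : Fin n => tr2 (m i * (M j) ^ (ε i))).det = 0 := by
  classical
  set A : Matrix (Fin n) (Fin 2 × Fin 2) ℂ := Matrix.of fun i p =>
    if ε i = 1 then (m i : Matrix (Fin 2) (Fin 2) ℂ) p.1 p.2
    else tr2 (m i) * (if p.1 = p.2 then 1 else 0)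
      - (m i : Matrix (Fin 2) (Fin 2) ℂ) p.1 p.2 with hA
  set B : Matrix (Fin 2 × Fin 2) (Fin n) ℂ := Matrix.of fun p j =>
    (M j : Matrix (Fin 2) (Fin 2) ℂ) p.2 p.1 with hB
  have key : (Matrix.of fun i j : Fin n => tr2 (m i * (M j) ^ (ε i))) = A * B := by
    ext i j
    have htr : tr2 (m i * M j)
        = ∑ p : Fin 2 × Fin 2, (m i : Matrix (Fin 2) (Fin 2) ℂ) p.1 p.2
          * (M j : Matrix (Fin 2) (Fin 2) ℂ) p.2 p.1 := by
      rw [Fintype.sum_prod_type]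
      simp [tr2, Matrix.trace, Matrix.diag, Matrix.mul_apply]
    have htrM : tr2 (M j) = ∑ p : Fin 2 × Fin 2,
        (if p.1 = p.2 then (1:ℂ) else 0) * (M j : Matrix (Fin 2) (Fin 2) ℂ) p.2 p.1 := by
      rw [Fintype.sum_prod_type]
      simp [tr2, Matrix.trace, Matrix.diag]
    rcases hε i with h | h
    · simp only [Matrix.mul_apply, hA, hB, Matrix.of_apply, h, if_pos rfl, zpow_one]
      simpa using htr
    · simp only [Matrix.mul_apply, hA, hB, Matrix.of_apply, h]
      norm_num
      rw [trace_mul_inv, htr, htrM, Finset.mul_sum, ← Finset.sum_sub_distrib]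
      congr 1
      ext p
      by_cases hp : p.1 = p.2 <;> simp [hp] <;> ring
  rw [key]
  by_contra hdet
  have hunit : IsUnit (A * B) := by
    rw [Matrix.isUnit_iff_isUnit_det]
    exact isUnit_iff_ne_zero.mpr hdet
  have hrank : (A * B).rank = n := by
    simpa using Matrix.rank_of_isUnit _ hunit
  have hle : (A * B).rank ≤ 4 := by
    calc (A * B).rank ≤ B.rank := Matrix.rank_mul_le_right A B
    _ ≤ Fintype.card (Fin 2 × Fin 2) := Matrix.rank_le_card_height B
    _ = 4 := by simp
  omega
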